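/- Fix k ∈ ℝ and define on {(r,s) ∈ ℝ² : 0 < s < r} the function φ̄(r,s) := r^{2(k²+1)}·(r² − s²)·exp( 2k·arctan( k − (1 + k²)s/√(r² − s²) ) ) / ( k²s² − 2ks√(r² − s²) + r² ). (Note the denominator equals (ks − √(r² − s²))² + s² > 0.) Then φ̄ satisfies the transport equation s·φ̄_r(r,s) + [ 1 − ((r² − s²)/r⁴)·( (r² − s²) − (ks − √(r² − s²))² ) ]·r·φ̄_s(r,s) = 0 at every point of {0 < s < r}. -/

import Mathlib

/-- Partial derivative with respect to the first variable `r`. -/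
noncomputable def pderivR (f : ℝ → ℝ → ℝ) (r s : ℝ) : ℝ := deriv (fun t => f t s) r

/-- Partial derivative with respect to the second variable `s`. -/
noncomputable def pderivS (f : ℝ → ℝ → ℝ) (r s : ℝ) : ℝ := deriv (fun t => f r t) s

/-- `φ̄(r,s) := r^{2(k²+1)}·(r² − s²)·exp(2k·arctan(k − (1 + k²)s/√(r² − s²)))
/ (k²s² − 2ks√(r² − s²) + r²)`. -/
noncomputable def phibar (k r s : ℝ) : ℝ :=
  r ^ ((2 * (k ^ 2 + 1) : ℝ)) * (r ^ 2 - s ^ 2) *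
    Real.exp (2 * k * Real.arctan (k - (1 + k ^ 2) * s / Real.sqrt (r ^ 2 - s ^ 2))) /
    (k ^ 2 * s ^ 2 - 2 * k * s * Real.sqrt (r ^ 2 - s ^ 2) + r ^ 2)

set_option maxHeartbeats 4000000 in
/-- `φ̄` satisfies the transport equation
`s·φ̄_r + [1 − ((r² − s²)/r⁴)·((r² − s²) − (ks − √(r² − s²))²)]·r·φ̄_s = 0`
on `{0 < s < r}`. -/
theorem stmt_5 (k : ℝ) :
    ∀ r s : ℝ, 0 < s → s < r →
      s * pderivR (phibar k) r s
        + (1 - ((r ^ 2 - s ^ 2) / r ^ 4) *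
            ((r ^ 2 - s ^ 2) - (k * s - Real.sqrt (r ^ 2 - s ^ 2)) ^ 2)) * r *
          pderivS (phibar k) r s = 0 := by
  intro r s hs hsr
  have hr0 : (0:ℝ) < r := hs.trans hsr
  have hB0 : (0:ℝ) < r ^ 2 - s ^ 2 := by nlinarith
  have hw0 : (0:ℝ) < Real.sqrt (r ^ 2 - s ^ 2) := Real.sqrt_pos.mpr hB0
  have hw2 : (Real.sqrt (r ^ 2 - s ^ 2)) ^ 2 = r ^ 2 - s ^ 2 := Real.sq_sqrt hB0.le
  have hD0 : (0:ℝ) < k ^ 2 * s ^ 2 - 2 * k * s * Real.sqrt (r ^ 2 - s ^ 2) + r ^ 2 := by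
    nlinarith [sq_nonneg (k*s - Real.sqrt (r ^ 2 - s ^ 2))]
  have h1 : HasDerivAt (fun t => phibar k t s)
      (((((2 * (k ^ 2 + 1) * r ^ ((2 * (k ^ 2 + 1) : ℝ) - 1)) * ((r ^ 2 - s ^ 2)) + (r ^ ((2 * (k ^ 2 + 1) : ℝ))) * (2 * r)) * (Real.exp (2 * k * Real.arctan (k - (1 + k ^ 2) * s / Real.sqrt (r ^ 2 - s ^ 2)))) + ((r ^ ((2 * (k ^ 2 + 1) : ℝ))) * (r ^ 2 - s ^ 2)) * (Real.exp (2 * k * Real.arctan (k - (1 + k ^ 2) * s / Real.sqrt (r ^ 2 - s ^ 2))) * (2 * k * (1 / (1 + (k - (1 + k ^ 2) * s / Real.sqrt (r ^ 2 - s ^ 2)) ^ 2) * (0 - (0 * Real.sqrt (r ^ 2 - s ^ 2) - (1 + k ^ 2) * s * (2 * r / (2 * Real.sqrt (r ^ 2 - s ^ 2)))) / Real.sqrt (r ^ 2 - s ^ 2) ^ 2))))) * (k ^ 2 * s ^ 2 - 2 * k * s * Real.sqrt (r ^ 2 - s ^ 2) + r ^ 2) - ((r ^ ((2 * (k ^ 2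 + 1) : ℝ))) * (r ^ 2 - s ^ 2) * (Real.exp (2 * k * Real.arctan (k - (1 + k ^ 2) * s / Real.sqrt (r ^ 2 - s ^ 2))))) * (0 - 2 * k * s * (2 * r / (2 * Real.sqrt (r ^ 2 - s ^ 2))) + 2 * r)) / (k ^ 2 * s ^ 2 - 2 * k * s * Real.sqrt (r ^ 2 - s ^ 2) + r ^ 2) ^ 2) r := by
    simp only [phibar]
    have hA : HasDerivAt (fun t : ℝ => t ^ ((2 * (k ^ 2 + 1) : ℝ)))
        (2 * (k ^ 2 + 1) * r ^ ((2 * (k ^ 2 + 1) : ℝ) - 1)) r :=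
      Real.hasDerivAt_rpow_const (Or.inl hr0.ne')
    have hB : HasDerivAt (fun t : ℝ => t ^ 2 - s ^ 2) (2 * r) r := by
      simpa using ((hasDerivAt_pow 2 r).sub_const (s ^ 2))
    have hsq := hB.sqrt hB0.ne'
    have harg := (hasDerivAt_const r k).sub
      (((hasDerivAt_const r ((1 + k ^ 2) * s)).div hsq hw0.ne'))
    have hexp := (harg.arctan.const_mul (2 * k)).exp
    have hD := ((hasDerivAt_const r (k ^ 2 * s ^ 2)).sub (hsq.const_mul (2 * k * s))).add
      (show HasDerivAt (fun t : ℝ => t ^ 2) (2 * r) r by simpa using (hasDerivAt_pow 2 r))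
    have raw := ((hA.mul hB).mul hexp).div hD hD0.ne'
    convert raw using 2 <;> simp -failIfUnchanged only [Pi.add_apply, Pi.sub_apply, Pi.mul_apply, Pi.div_apply] <;> first | rfl | ring
  have h2 : HasDerivAt (fun t => phibar k r t)
      ((((0 * (r ^ 2 - s ^ 2) + (r ^ ((2 * (k ^ 2 + 1) : ℝ))) * (0 - 2 * s)) * (Real.exp (2 * k * Real.arctan (k - (1 + k ^ 2) * s / Real.sqrt (r ^ 2 - s ^ 2)))) + ((r ^ ((2 * (k ^ 2 + 1) : ℝ))) * (r ^ 2 - s ^ 2)) * (Real.exp (2 * k * Real.arctan (k - (1 + k ^ 2) * s / Real.sqrt (r ^ 2 - s ^ 2))) * (2 * k * (1 / (1 + (k - (1 + k ^ 2) * s / Real.sqrt (r ^ 2 - s ^ 2)) ^ 2) * (0 - ((1 + k ^ 2) * 1 * (Real.sqrt (r ^ 2 - s ^ 2)) - (1 + k ^ 2) * s * ((0 - 2 * s) / (2 * Real.sqrt (r ^ 2 - s ^ 2)))) / Real.sqrt (r ^ 2 - s ^ 2) ^ 2))))) * (k ^ 2 * s ^ 2 - 2 * k * s * Real.sqrt (r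 ^ 2 - s ^ 2) + r ^ 2) - ((r ^ ((2 * (k ^ 2 + 1) : ℝ))) * (r ^ 2 - s ^ 2) * (Real.exp (2 * k * Real.arctan (k - (1 + k ^ 2) * s / Real.sqrt (r ^ 2 - s ^ 2))))) * (k ^ 2 * (2 * s ^ 1) - ((2 * (k * 1)) * (Real.sqrt (r ^ 2 - s ^ 2)) + (2 * (k * s)) * ((0 - 2 * s) / (2 * Real.sqrt (r ^ 2 - s ^ 2)))) + 0)) / (k ^ 2 * s ^ 2 - 2 * k * s * Real.sqrt (r ^ 2 - s ^ 2) + r ^ 2) ^ 2) s := by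
    simp only [phibar]
    have hB : HasDerivAt (fun t : ℝ => r ^ 2 - t ^ 2) (0 - 2 * s) s := by
      simpa using ((hasDerivAt_pow 2 s).const_sub (r ^ 2))
    have hsq := hB.sqrt hB0.ne'
    have hlin : HasDerivAt (fun t : ℝ => (1 + k ^ 2) * t) ((1 + k ^ 2) * 1) s :=
      (hasDerivAt_id' (x := s)).const_mul (1 + k ^ 2)
    have harg := (hasDerivAt_const s k).sub (hlin.div hsq hw0.ne')
    have hexp := (harg.arctan.const_mul (2 * k)).exp
    have hD := (((hasDerivAt_pow 2 s).const_mul (k ^ 2)).sub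
        ((((hasDerivAt_id' (x := s)).const_mul (2 * k)).mul hsq))).add (hasDerivAt_const s (r ^ 2))
    have raw := (((hasDerivAt_const s (r ^ ((2 * (k ^ 2 + 1) : ℝ)))).mul hB).mul hexp).div hD hD0.ne'
    convert raw using 2 <;> simp -failIfUnchanged only [Pi.add_apply, Pi.sub_apply, Pi.mul_apply, Pi.div_apply] <;> first | rfl | (push_cast; ring)
  rw [pderivR, pderivS, h1.deriv, h2.deriv]
  have hA1 : r ^ ((2 * (k ^ 2 + 1) : ℝ) - 1) = r ^ ((2 * (k ^ 2 + 1) : ℝ)) / r := by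
    rw [Real.rpow_sub hr0, Real.rpow_one]
  rw [hA1]
  set w : ℝ := Real.sqrt (r ^ 2 - s ^ 2) with hwdef
  set P : ℝ := r ^ ((2 * (k ^ 2 + 1) : ℝ)) with hPdef
  set E : ℝ := Real.exp (2 * k * Real.arctan (k - (1 + k ^ 2) * s / w)) with hEdef
  have hone : (0:ℝ) < 1 + (k - (1 + k ^ 2) * s / w) ^ 2 := by positivity
  have hP0 : (0:ℝ) < P := Real.rpow_pos_of_pos hr0 _
  have hE0 : (0:ℝ) < E := Real.exp_pos _
  field_simp
  linear_combination (((2:ℝ) * r ^ 2 * s ^ 3 * w ^ 3 * P * E + (2:ℝ) * r ^ 2 * s ^ 5 * w * P * E + (-2:ℝ) * r ^ 4 * s * w ^ 3 * P * E + (-2:ℝ) * r ^ 4 * s ^ 3 * w * P * E + (-2:ℝ) * k * s ^ 4 * w ^ 4 * P * E + (-4:ℝ) * k * s ^ 6 * w ^ 2 * P * E + (-2:ℝ) * k * s ^ 8 * P * E + (-2:ℝ) * k * r ^ 2 * s ^ 4 * w ^ 2 * P * E + (2:ℝ) * k * r ^ 2 * s ^ 6 * P * E + (2:ℝ) * k *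 r ^ 4 * w ^ 4 * P * E + (6:ℝ) * k * r ^ 4 * s ^ 2 * w ^ 2 * P * E + (2:ℝ) * k * r ^ 4 * s ^ 4 * P * E + (-2:ℝ) * k * r ^ 6 * s ^ 2 * P * E + (12:ℝ) * k ^ 2 * s ^ 5 * w ^ 3 * P * E + (12:ℝ) * k ^ 2 * s ^ 7 * w * P * E + (-4:ℝ) * k ^ 2 * r ^ 2 * s ^ 3 * w ^ 3 * P * E + (-10:ℝ) * k ^ 2 * r ^ 2 * s ^ 5 * w * P * E + (-8:ℝ) * k ^ 2 * r ^ 4 * s * w ^ 3 * P * E + (-2:ℝ) * k ^ 2 * r ^ 4 * s ^ 3 * w * P * E + (-2:ℝ) * k ^ 3 * s ^ 4 * w ^ 4 * P * E + (-26:ℝ) * k ^ 3 * s ^ 6 * w ^ 2 * P * E + (-8:ℝ) * k ^ 3 * s ^ 8 * P * E + (14:ℝ) * k ^ 3 * r ^ 2 * s ^ 4 * w ^ 2 * P * E + (10:ℝ) * k ^ 3 * r ^ 2 * s ^ 6 * P * E + (2:ℝ) * k ^ 3 * r ^ 4 * w ^ 4 * P * E + (12:ℝ) * k ^ 3 * r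 ^ 4 * s ^ 2 * w ^ 2 * P * E + (-2:ℝ) * k ^ 3 * r ^ 6 * s ^ 2 * P * E + (12:ℝ) * k ^ 4 * s ^ 5 * w ^ 3 * P * E + (28:ℝ) * k ^ 4 * s ^ 7 * w * P * E + (-6:ℝ) * k ^ 4 * r ^ 2 * s ^ 3 * w ^ 3 * P * E + (-26:ℝ) * k ^ 4 * r ^ 2 * s ^ 5 * w * P * E + (-6:ℝ) * k ^ 4 * r ^ 4 * s * w ^ 3 * P * E + (-2:ℝ) * k ^ 4 * r ^ 4 * s ^ 3 * w * P * E + (-22:ℝ) * k ^ 5 * s ^ 6 * w ^ 2 * P * E + (-10:ℝ) * k ^ 5 * s ^ 8 * P * E + (16:ℝ) * k ^ 5 * r ^ 2 * s ^ 4 * w ^ 2 * P * E + (12:ℝ) * k ^ 5 * r ^ 2 * s ^ 6 * P * E + (6:ℝ) * k ^ 5 * r ^ 4 * s ^ 2 * w ^ 2 * P * E + (-2:ℝ) * k ^ 5 * r ^ 4 * s ^ 4 * P * E + (16:ℝ) * k ^ 6 * s ^ 7 * w * P * E + (-14:ℝ) * k ^ 6 * r ^ 2 * s ^ 5 * w *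 P * E + (-2:ℝ) * k ^ 6 * r ^ 4 * s ^ 3 * w * P * E + (-4:ℝ) * k ^ 7 * s ^ 8 * P * E + (4:ℝ) * k ^ 7 * r ^ 2 * s ^ 6 * P * E) / (s * k * (s * k - 2 * w) + r ^ 2) ^ 2) * hw2
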